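/- For every m ≥ 2, consider the caterpillar T_m(3, 0, …, 0, 3) with three pendant leaves at each of the two endpoint spine vertices and no other leaves, and let w be the edge vector equal to 3 on every spine edge and equal to 1 on every pendant edge. Then R_{T_m(3,0,…,0,3)} w = 0 and λ_max(R_{T_m(3,0,…,0,3)}) = 0. -/

import Mathlib

open Finset Matrix

/-- The Ricci matrix of a graph, indexed by edges: diagonal entry `-(1/d_x + 1/d_y)`
for an edge `{x,y}`, entry `1/d_z` for distinct edges sharing the vertex `z`, and `0`
for disjoint edges.  Here the degree of `v` is `(G.neighborSet v).ncard`. -/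
noncomputable def ricciMatrix {V : Type*} (G : SimpleGraph V) [Fintype V] [DecidableEq V] :
    Matrix G.edgeSet G.edgeSet ℝ := fun e f =>
  if (e : Sym2 V) = (f : Sym2 V) then
    -∑ v : V, if v ∈ (e : Sym2 V) then 1 / ((G.neighborSet v).ncard : ℝ) else 0
  else
    ∑ v : V, if v ∈ (e : Sym2 V) ∧ v ∈ (f : Sym2 V) then 1 / ((G.neighborSet v).ncard : ℝ) else 0

/-- The largest eigenvalue of a real matrix. -/
noncomputable def lambdaMax {n : Type*} [Fintype n] (M : Matrix n n ℝ) : ℝ :=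
  sSup {t : ℝ | ∃ w : n → ℝ, w ≠ 0 ∧ M.mulVec w = t • w}

/-- The caterpillar `T_m(a)`: a spine path `v_0 — v_1 — ⋯ — v_{m-1}` (the `Sum.inl`
vertices) together with `a i` pendant leaves attached to the spine vertex `v i`
(the `Sum.inr ⟨i, _⟩` vertices). -/
def caterpillar (m : ℕ) (a : Fin m → ℕ) :
    SimpleGraph (Fin m ⊕ (Σ i : Fin m, Fin (a i))) where
  Adj x y := match x, y with
    | .inl i, .inl j => i.val + 1 = j.val ∨ j.val + 1 = i.val
    | .inl i, .inr t => i = t.1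
    | .inr t, .inl i => i = t.1
    | .inr _, .inr _ => False
  symm := by
    constructor
    rintro (i | t) (j | s) h
    · exact Or.symm h
    · exact h
    · exact h
    · exact h
  loopless := by
    constructor
    rintro (i | t) h
    · omega
    · exact h

instance (m : ℕ) (a : Fin m → ℕ) : DecidableRel (caterpillar m a).Adj := fun x y =>
  match x, y with
  | .inl _, .inl _ => inferInstanceAs (Decidable (_ ∨ _))
  | .inl i, .inr t => inferInstanceAs (Decidable (i = t.1))
  | .inr t, .inl i => inferInstanceAs (Decidable (i = t.1))
  | .inr _, .inr _ => isFalse id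

/-- The endpoint-only leaf-count sequence `(a, 0, …, 0, b)` of length `m`. -/
def endpointSeq (m a b : ℕ) : Fin m → ℕ :=
  fun i => if i.val = 0 then a else if i.val = m - 1 then b else 0

/-- The endpoint-only caterpillar `C_m(a,b) = T_m(a, 0, …, 0, b)`. -/
def endpointCaterpillar (m a b : ℕ) :
    SimpleGraph (Fin m ⊕ (Σ i : Fin m, Fin (endpointSeq m a b i))) :=
  caterpillar m (endpointSeq m a b)

instance (m a b : ℕ) : DecidableRel (endpointCaterpillar m a b).Adj :=
  inferInstanceAs (DecidableRel (caterpillar m (endpointSeq m a b)).Adj)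

open Classical in
/-- The edge vector on a caterpillar that equals `3` on every spine edge (an edge both
of whose endpoints are spine vertices) and `1` on every pendant edge. -/
noncomputable def spinePendantVector (m : ℕ) (a : Fin m → ℕ) :
    (caterpillar m a).edgeSet → ℝ := fun e =>
  if ∃ i j : Fin m, (e : Sym2 (Fin m ⊕ (Σ i : Fin m, Fin (a i)))) = s(Sum.inl i, Sum.inl j)
  then 3 else 1

lemma ite_mul_zero {c : Prop} [Decidable c] (a b : ℝ) :
    (if c then a * b else 0) = (if c then a else 0) * b := by
  split <;> simp

section General
variable {V : Type*} [Fintype V] [DecidableEq V] (G : SimpleGraph V) [DecidableRel G.Adj]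

lemma sum_pair_mem (x y : V) (hxy : x ≠ y) (g : V → ℝ) :
    (∑ v : V, if v ∈ s(x, y) then g v else 0) = g x + g y := by
  have : ∀ v : V, (if v ∈ s(x, y) then g v else 0)
      = (if v = x then g v else 0) + (if v = y then g v else 0) := by
    intro v
    simp only [Sym2.mem_iff]
    by_cases h1 : v = x <;> by_cases h2 : v = y <;> simp_all
  simp only [this, Finset.sum_add_distrib, Finset.sum_ite_eq', Finset.mem_univ, if_true]

lemma sum_incidence (W : Sym2 V → ℝ) (v : V) :
    (∑ f : G.edgeSet, if v ∈ (f : Sym2 V) then W (f : Sym2 V) else 0)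
      = ∑ u : V, if G.Adj v u then W s(v, u) else 0 := by
  rw [← Finset.sum_filter, ← Finset.sum_filter]
  refine Finset.sum_bij' (fun f hf => Sym2.Mem.other' (Finset.mem_filter.mp hf).2)
    (fun u hu => ⟨s(v, u), (Finset.mem_filter.mp hu).2⟩) ?_ ?_ ?_ ?_ ?_
  · intro f hf
    have h := (Finset.mem_filter.mp hf).2
    simp only [Finset.mem_filter, Finset.mem_univ, true_and]
    rw [← SimpleGraph.mem_edgeSet, Sym2.other_spec' h]
    exact f.2
  · intro u hu
    simp [Sym2.mem_mk_left]
  · intro f hf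
    apply Subtype.ext
    exact Sym2.other_spec' (Finset.mem_filter.mp hf).2
  · intro u hu
    have h : v ∈ s(v, u) := Sym2.mem_mk_left v u
    exact Sym2.congr_right.mp (Sym2.other_spec' _)
  · intro f hf
    exact congrArg W (Sym2.other_spec' (Finset.mem_filter.mp hf).2).symm

lemma ricci_mulVec (w : G.edgeSet → ℝ) (e : G.edgeSet) :
    (ricciMatrix G).mulVec w e =
      ∑ v : V, if v ∈ (e : Sym2 V) then
        (1 / ((G.neighborSet v).ncard : ℝ)) *
          ((∑ f : G.edgeSet, if v ∈ (f : Sym2 V) then w f else 0) - 2 * w e) else 0 := by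
  classical
  set D : V → ℝ := fun v => 1 / ((G.neighborSet v).ncard : ℝ) with hD
  have step1 : ∀ f : G.edgeSet, ricciMatrix G e f * w f
      = (∑ v : V, if v ∈ (e : Sym2 V) ∧ v ∈ (f : Sym2 V) then D v * w f else 0)
        - (if f = e then 2 * (∑ v : V, if v ∈ (e : Sym2 V) then D v else 0) * w e else 0) := by
    intro f
    by_cases h : (e : Sym2 V) = (f : Sym2 V)
    · have hef : f = e := Subtype.ext h.symm
      subst hef
      rw [ricciMatrix, if_pos rfl, if_pos rfl]
      simp only [and_self, ite_mul_zero, ← Finset.sum_mul]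
      ring
    · have hef : f ≠ e := fun hc => h (by rw [hc])
      rw [ricciMatrix, if_neg h, if_neg hef, sub_zero]
      simp only [ite_mul_zero, ← Finset.sum_mul]
      rfl
  unfold Matrix.mulVec dotProduct
  simp only [step1, Finset.sum_sub_distrib, Finset.sum_ite_eq', Finset.mem_univ, if_true]
  rw [Finset.sum_comm]
  have h1 : ∀ v : V, (∑ f : G.edgeSet, if v ∈ (e : Sym2 V) ∧ v ∈ (f : Sym2 V) then D v * w f else 0)
      = if v ∈ (e : Sym2 V) then
          D v * (∑ f : G.edgeSet, if v ∈ (f : Sym2 V) then w f else 0) else 0 := by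
    intro v
    by_cases hv : v ∈ (e : Sym2 V)
    · rw [if_pos hv, Finset.mul_sum]
      refine Finset.sum_congr rfl fun f _ => ?_
      simp only [hv, true_and]
      split <;> simp
    · rw [if_neg hv]
      refine Finset.sum_eq_zero fun f _ => ?_
      rw [if_neg (fun hc => hv hc.1)]
  have h2 : (2 * ∑ v : V, if v ∈ (e : Sym2 V) then D v else 0) * w e
      = ∑ v : V, if v ∈ (e : Sym2 V) then D v * (2 * w e) else 0 := by
    rw [Finset.mul_sum, Finset.sum_mul]
    refine Finset.sum_congr rfl fun v _ => ?_
    split <;> ring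
  rw [h2]
  simp only [h1]
  rw [← Finset.sum_sub_distrib]
  refine Finset.sum_congr rfl fun v _ => ?_
  split <;> ring

end General

lemma eig_nonpos {n : Type*} [Fintype n] [DecidableEq n] (M : Matrix n n ℝ)
    (hoff : ∀ i j : n, i ≠ j → 0 ≤ M i j)
    (w : n → ℝ) (hw : ∀ i, 0 < w i) (hMw : M.mulVec w = 0)
    {t : ℝ} {v : n → ℝ} (hv : v ≠ 0) (hMv : M.mulVec v = t • v) : t ≤ 0 := by
  classical
  have hne : (Finset.univ : Finset n).Nonempty := by
    rcases isEmpty_or_nonempty n with h | h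
    · exact (hv (funext fun i => (h.false i).elim)).elim
    · exact Finset.univ_nonempty
  obtain ⟨i, -, hi⟩ := Finset.exists_max_image Finset.univ (fun j => |v j| / w j) hne
  set r : ℝ := |v i| / w i with hr
  have hrj : ∀ j, |v j| ≤ r * w j := fun j => by
    have := hi j (Finset.mem_univ j)
    rw [div_le_div_iff₀ (hw j) (hw i)] at this
    rw [hr, div_mul_eq_mul_div, le_div_iff₀ (hw i)]
    linarith
  have hrpos : 0 < r := by
    obtain ⟨j, hj⟩ := Function.ne_iff.mp hv
    have h1 : 0 < |v j| / w j := div_pos (abs_pos.mpr hj) (hw j)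
    exact lt_of_lt_of_le h1 (hi j (Finset.mem_univ j))
  have hvi : |v i| = r * w i := by
    rw [hr, div_mul_cancel₀]
    exact (hw i).ne'
  -- choose u = ±v with u i = r * w i
  obtain ⟨u, hu, hui, huj⟩ : ∃ u : n → ℝ, M.mulVec u = t • u ∧ u i = r * w i ∧
      ∀ j, u j ≤ r * w j := by
    rcases abs_cases (v i) with ⟨h1, -⟩ | ⟨h1, -⟩
    · exact ⟨v, hMv, by rw [← h1, hvi], fun j => le_trans (le_abs_self _) (hrj j)⟩
    · refine ⟨-v, ?_, ?_, fun j => ?_⟩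
      · rw [Matrix.mulVec_neg, hMv, smul_neg]
      · simp only [Pi.neg_apply]; rw [← h1]; exact hvi
      · have := hrj j
        have : -v j ≤ |v j| := neg_le_abs _
        simp only [Pi.neg_apply]
        linarith [hrj j]
  have key : t * (r * w i) ≤ 0 := by
    have hMui : (M.mulVec u) i = t * (r * w i) := by
      rw [hu]; simp [Pi.smul_apply, smul_eq_mul, hui]
    have hsum : (M.mulVec u) i = M i i * u i + ∑ j ∈ Finset.univ.erase i, M i j * u j := by
      rw [Matrix.mulVec, dotProduct]
      exact (Finset.add_sum_erase _ (fun j => M i j * u j) (Finset.mem_univ i)).symm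
    have hwsum : M i i * w i + ∑ j ∈ Finset.univ.erase i, M i j * w j = 0 := by
      have h0 : (M.mulVec w) i = 0 := by rw [hMw]; rfl
      rw [Matrix.mulVec, dotProduct] at h0
      exact (Finset.add_sum_erase _ (fun j => M i j * w j) (Finset.mem_univ i)).trans h0
    have hle : ∑ j ∈ Finset.univ.erase i, M i j * u j
        ≤ ∑ j ∈ Finset.univ.erase i, M i j * (r * w j) := by
      refine Finset.sum_le_sum fun j hj => ?_
      exact mul_le_mul_of_nonneg_left (huj j) (hoff i j (Finset.ne_of_mem_erase hj).symm)
    have heq : ∑ j ∈ Finset.univ.erase i, M i j * (r * w j)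
        = r * ∑ j ∈ Finset.univ.erase i, M i j * w j := by
      rw [Finset.mul_sum]; exact Finset.sum_congr rfl fun j _ => by ring
    have : t * (r * w i) ≤ M i i * (r * w i) + r * (- (M i i * w i)) := by
      rw [← hMui, hsum]
      have : r * ∑ j ∈ Finset.univ.erase i, M i j * w j = r * (-(M i i * w i)) := by
        congr 1; linarith
      calc M i i * u i + ∑ j ∈ Finset.univ.erase i, M i j * u j
          ≤ M i i * u i + r * ∑ j ∈ Finset.univ.erase i, M i j * w j := by
            rw [← heq] at *; linarith
        _ = M i i * (r * w i) + r * (-(M i i * w i)) := by rw [hui, this]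
    linarith [this]
  have hpos : 0 < r * w i := mul_pos hrpos (hw i)
  nlinarith [key, hpos]

section CaterpillarLemmas
open Sum

lemma sum_fin_indicator (m c : ℕ) (r : ℝ) :
    (∑ j : Fin m, if j.val = c then r else 0) = if c < m then r else 0 := by
  rcases lt_or_ge c m with h | h
  · rw [if_pos h, Finset.sum_eq_single ⟨c, h⟩]
    · simp
    · intro j _ hj
      exact if_neg fun hc => hj (Fin.ext hc)
    · simp
  · rw [if_neg (not_lt.mpr h)]
    exact Finset.sum_eq_zero fun j _ => by
      have hj := j.isLt; exact if_neg (by omega)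

lemma adj_or_split (m : ℕ) (i : Fin m) (r : ℝ) :
    (∑ j : Fin m, if (i.val + 1 = j.val ∨ j.val + 1 = i.val) then r else 0)
      = (if i.val + 1 < m then r else 0) + (if 0 < i.val then r else 0) := by
  have hsplit : ∀ j : Fin m, (if (i.val + 1 = j.val ∨ j.val + 1 = i.val) then r else 0)
      = (if j.val = i.val + 1 then r else 0)
        + (if (j.val = i.val - 1 ∧ 0 < i.val) then r else 0) := by
    intro j
    split_ifs <;> first | (exfalso; omega) | simp
  rw [Finset.sum_congr rfl fun j _ => hsplit j, Finset.sum_add_distrib,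
    sum_fin_indicator]
  congr 1
  by_cases h0 : 0 < i.val
  · have : ∀ j : Fin m, (if (j.val = i.val - 1 ∧ 0 < i.val) then r else 0)
        = if j.val = i.val - 1 then r else 0 := fun j => by simp [h0]
    rw [Finset.sum_congr rfl fun j _ => this j, sum_fin_indicator,
      if_pos (by have := i.isLt; omega), if_pos h0]
  · simp [h0]

variable {m : ℕ} {a : Fin m → ℕ}

lemma adj_ll (i j : Fin m) :
    (caterpillar m a).Adj (inl i) (inl j) ↔ (i.val + 1 = j.val ∨ j.val + 1 = i.val) := Iff.rfl

lemma adj_lr (i : Fin m) (t : Σ i : Fin m, Fin (a i)) :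
    (caterpillar m a).Adj (inl i) (inr t) ↔ i = t.1 := Iff.rfl

lemma adj_rl (t : Σ i : Fin m, Fin (a i)) (i : Fin m) :
    (caterpillar m a).Adj (inr t) (inl i) ↔ i = t.1 := Iff.rfl

lemma adj_rr (t s : Σ i : Fin m, Fin (a i)) :
    (caterpillar m a).Adj (inr t) (inr s) ↔ False := Iff.rfl

lemma sum_adj_inl (i : Fin m) (F : (Fin m ⊕ Σ i : Fin m, Fin (a i)) → ℝ) (p q : ℝ)
    (hF1 : ∀ j, F (inl j) = p) (hF2 : ∀ t, F (inr t) = q) :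
    (∑ u, if (caterpillar m a).Adj (inl i) u then F u else 0)
      = ((if i.val + 1 < m then p else 0) + (if 0 < i.val then p else 0)) + (a i : ℝ) * q := by
  rw [Fintype.sum_sum_type]
  congr 1
  · rw [← adj_or_split m i p]
    refine Finset.sum_congr rfl fun j _ => ?_
    rw [hF1 j]
    simp only [adj_ll]
  · rw [← Finset.univ_sigma_univ, Finset.sum_sigma]
    have key : ∀ j : Fin m,
        (∑ k : Fin (a j), if (caterpillar m a).Adj (inl i) (inr ⟨j, k⟩)
          then F (inr ⟨j, k⟩) else 0) = if i = j then (a j : ℝ) * q else 0 := by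
      intro j
      have h1 : ∀ k : Fin (a j), (if (caterpillar m a).Adj (inl i) (inr ⟨j, k⟩)
          then F (inr ⟨j, k⟩) else 0) = if i = j then q else 0 := fun k => by
        rw [hF2]; simp only [adj_lr]
      rw [Finset.sum_congr rfl fun k _ => h1 k, Finset.sum_const, Finset.card_univ,
        Fintype.card_fin]
      split_ifs <;> simp [nsmul_eq_mul]
    rw [Finset.sum_congr rfl fun j _ => key j, Finset.sum_ite_eq, if_pos (Finset.mem_univ i)]

lemma sum_adj_inr (t : Σ i : Fin m, Fin (a i)) (F : (Fin m ⊕ Σ i : Fin m, Fin (a i)) → ℝ)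
    (q : ℝ) (hF : ∀ j, F (inl j) = q) :
    (∑ u, if (caterpillar m a).Adj (inr t) u then F u else 0) = q := by
  rw [Fintype.sum_sum_type]
  have h2 : (∑ s : Σ i : Fin m, Fin (a i),
      if (caterpillar m a).Adj (inr t) (inr s) then F (inr s) else 0) = 0 :=
    Finset.sum_eq_zero fun s _ => by simp only [adj_rr, if_false]
  rw [h2, add_zero]
  have h1 : ∀ j : Fin m, (if (caterpillar m a).Adj (inr t) (inl j) then F (inl j) else 0)
      = if j = t.1 then q else 0 := fun j => by rw [hF]; simp only [adj_rl]
  rw [Finset.sum_congr rfl fun j _ => h1 j, Finset.sum_ite_eq', if_pos (Finset.mem_univ _)]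

open Classical in
noncomputable def Wfun (m : ℕ) (a : Fin m → ℕ) :
    Sym2 (Fin m ⊕ Σ i : Fin m, Fin (a i)) → ℝ := fun p =>
  if ∃ i j : Fin m, p = s(Sum.inl i, Sum.inl j) then 3 else 1

lemma spv_eq (e : (caterpillar m a).edgeSet) :
    spinePendantVector m a e = Wfun m a (e : Sym2 _) := rfl

lemma Wfun_spine (i j : Fin m) : Wfun m a s(inl i, inl j) = 3 := if_pos ⟨i, j, rfl⟩

lemma Wfun_pendant (p : Sym2 (Fin m ⊕ Σ i : Fin m, Fin (a i))) (t : Σ i : Fin m, Fin (a i))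
    (h : inr t ∈ p) : Wfun m a p = 1 := by
  classical
  unfold Wfun
  rw [if_neg]
  rintro ⟨i, j, rfl⟩
  rw [Sym2.mem_iff] at h
  rcases h with h | h <;> simp_all

lemma deg_real {V : Type*} [Fintype V] [DecidableEq V] (G : SimpleGraph V)
    [DecidableRel G.Adj] (v : V) :
    ((G.neighborSet v).ncard : ℝ) = ∑ u : V, if G.Adj v u then (1 : ℝ) else 0 := by
  have h : (G.neighborSet v).toFinset = Finset.univ.filter (fun u => G.Adj v u) := by
    ext u; simp
  rw [Set.ncard_eq_toFinset_card', h, Finset.card_filter]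
  push_cast
  exact Finset.sum_congr rfl fun u _ => by split <;> simp

end CaterpillarLemmas

section Endpoint
open Sum

variable {m : ℕ}

lemma seq_leaf (hm : 2 ≤ m) (t : Σ i : Fin m, Fin (endpointSeq m 3 3 i)) :
    (t.1.val = 0 ∨ t.1.val = m - 1) := by
  have hpos := t.2.pos
  have := t.1.isLt
  unfold endpointSeq at hpos
  split_ifs at hpos <;> omega

lemma NS_spine (hm : 2 ≤ m) (i : Fin m) :
    (∑ u, if (endpointCaterpillar m 3 3).Adj (inl i) u
      then Wfun m (endpointSeq m 3 3) s(inl i, u) else 0) = 6 := by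
  have h := sum_adj_inl (a := endpointSeq m 3 3) i
    (fun u => Wfun m (endpointSeq m 3 3) s(inl i, u)) 3 1
    (fun j => Wfun_spine i j)
    (fun t => Wfun_pendant _ t (Sym2.mem_mk_right _ _))
  refine h.trans ?_
  have hlt := i.isLt
  unfold endpointSeq
  split_ifs <;> push_cast <;> first | (exfalso; omega) | norm_num

lemma NS_leaf (t : Σ i : Fin m, Fin (endpointSeq m 3 3 i)) :
    (∑ u, if (endpointCaterpillar m 3 3).Adj (inr t) u
      then Wfun m (endpointSeq m 3 3) s(inr t, u) else 0) = 1 :=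
  sum_adj_inr (a := endpointSeq m 3 3) t _ 1
    (fun j => Wfun_pendant _ t (Sym2.mem_mk_left _ _))

lemma deg_spine_endpoint (hm : 2 ≤ m) (i : Fin m) (hi : i.val = 0 ∨ i.val = m - 1) :
    (((endpointCaterpillar m 3 3).neighborSet (inl i)).ncard : ℝ) = 4 := by
  rw [deg_real]
  have h := sum_adj_inl (a := endpointSeq m 3 3) i (fun _ => (1 : ℝ)) 1 1
    (fun _ => rfl) (fun _ => rfl)
  refine h.trans ?_
  have hlt := i.isLt
  unfold endpointSeq
  split_ifs <;> push_cast <;> first | (exfalso; omega) | norm_num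

lemma deg_leaf' (t : Σ i : Fin m, Fin (endpointSeq m 3 3 i)) :
    (((endpointCaterpillar m 3 3).neighborSet (inr t)).ncard : ℝ) = 1 := by
  rw [deg_real]
  exact sum_adj_inr (a := endpointSeq m 3 3) t (fun _ => (1 : ℝ)) 1 (fun _ => rfl)

lemma mulVec_zero (hm : 2 ≤ m) :
    (ricciMatrix (endpointCaterpillar m 3 3)).mulVec
      (spinePendantVector m (endpointSeq m 3 3)) = 0 := by
  funext e
  rw [ricci_mulVec (endpointCaterpillar m 3 3) (spinePendantVector m (endpointSeq m 3 3)) e, Pi.zero_apply]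
  have hspv : ∀ f : (endpointCaterpillar m 3 3).edgeSet, spinePendantVector m (endpointSeq m 3 3) f = Wfun m (endpointSeq m 3 3) (f : Sym2 _) := fun f => rfl
  simp only [hspv, sum_incidence]
  obtain ⟨p, hp⟩ := e
  induction p using Sym2.ind with
  | _ x y =>
    have hadj : (endpointCaterpillar m 3 3).Adj x y := (SimpleGraph.mem_edgeSet _).mp hp
    have hne : x ≠ y := hadj.ne
    rw [sum_pair_mem x y hne]
    match x, y, hadj, hne with
    | inl i, inl j, hadj, hne =>
      rw [Wfun_spine i j, NS_spine hm i, NS_spine hm j]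
      norm_num
    | inl i, inr t, hadj, hne =>
      have hit : i = t.1 := hadj
      rw [Wfun_pendant s(inl i, inr t) t (Sym2.mem_mk_right _ _),
        NS_spine hm i, NS_leaf t, deg_leaf' t,
        deg_spine_endpoint hm i (hit ▸ seq_leaf hm t)]
      norm_num
    | inr t, inl i, hadj, hne =>
      have hit : i = t.1 := hadj
      rw [Wfun_pendant s(inr t, inl i) t (Sym2.mem_mk_left _ _),
        NS_spine hm i, NS_leaf t, deg_leaf' t,
        deg_spine_endpoint hm i (hit ▸ seq_leaf hm t)]
      norm_num
    | inr t, inr s, hadj, hne => exact hadj.elim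

end Endpoint


/-- **The stable zero family `(3, 0, …, 0, 3)`.**
For each `m ≥ 2`, the edge vector on `T_m(3,0,…,0,3)` equal to `3` on spine edges and
`1` on pendant edges is a null vector of the Ricci matrix, and
`λ_max(R_{T_m(3,0,…,0,3)}) = 0`. -/
theorem stable_zero_family (m : ℕ) (hm : 2 ≤ m) :
    (ricciMatrix (endpointCaterpillar m 3 3)).mulVec
        (spinePendantVector m (endpointSeq m 3 3)) = 0 ∧
    lambdaMax (ricciMatrix (endpointCaterpillar m 3 3)) = 0 := by
  classical
  refine ⟨mulVec_zero hm, ?_⟩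
  set G := endpointCaterpillar m 3 3 with hG
  set w := spinePendantVector m (endpointSeq m 3 3) with hw
  have hwpos : ∀ e, 0 < w e := fun e => by
    rw [hw]; unfold spinePendantVector; split <;> norm_num
  have hwne : w ≠ 0 := by
    have hadj : G.Adj (Sum.inl ⟨0, by omega⟩) (Sum.inl ⟨1, by omega⟩) := Or.inl rfl
    intro h
    have := congrFun h ⟨s(Sum.inl ⟨0, by omega⟩, Sum.inl ⟨1, by omega⟩),
      (SimpleGraph.mem_edgeSet _).mpr hadj⟩
    rw [Pi.zero_apply] at this
    exact absurd this (ne_of_gt (hwpos _))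
  have hoff : ∀ e f : G.edgeSet, e ≠ f → 0 ≤ ricciMatrix G e f := by
    intro e f hef
    have h := Subtype.coe_ne_coe.mpr hef
    rw [ricciMatrix, if_neg h]
    refine Finset.sum_nonneg fun v _ => ?_
    split <;> positivity
  have hmem : (0 : ℝ) ∈ {t : ℝ | ∃ v : G.edgeSet → ℝ, v ≠ 0 ∧
      (ricciMatrix G).mulVec v = t • v} :=
    ⟨w, hwne, by rw [mulVec_zero hm]; exact (zero_smul ℝ _).symm⟩
  have hub : ∀ t ∈ {t : ℝ | ∃ v : G.edgeSet → ℝ, v ≠ 0 ∧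
      (ricciMatrix G).mulVec v = t • v}, t ≤ 0 := by
    rintro t ⟨v, hv, hMv⟩
    exact eig_nonpos (ricciMatrix G) hoff w hwpos (mulVec_zero hm) hv hMv
  rw [lambdaMax]
  exact le_antisymm (csSup_le ⟨0, hmem⟩ hub) (le_csSup ⟨0, hub⟩ hmem)
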